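/- Let K and (Kₖ) be nonempty compact subsets of ℂ. Suppose that for every polynomial P in λ and λ̄, sup_{λ ∈ Kₖ} |P(λ, λ̄)| → sup_{λ ∈ K} |P(λ, λ̄)| as k → ∞. Then sup_{λ ∈ Kₖ} dist(λ, K) → 0. -/

import Mathlib

open Filter Topology Metric Polynomial

lemma evP_cont (P : FreeAlgebra ℂ Bool) :
    Continuous fun z : ℂ =>
      (FreeAlgebra.lift ℂ fun b : Bool => if b then z else (starRingEnd ℂ) z) P := by
  induction P using FreeAlgebra.induction with
  | grade0 r =>
    simp only [AlgHom.commutes, Algebra.algebraMap_self, RingHom.id_apply]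
    exact continuous_const
  | grade1 b =>
    cases b <;> simp only [FreeAlgebra.lift_ι_apply, if_true, Bool.false_eq_true, if_false]
    · exact Complex.continuous_conj
    · exact continuous_id
  | mul a b ha hb => simp only [map_mul]; exact ha.mul hb
  | add a b ha hb => simp only [map_add]; exact ha.add hb

noncomputable def Phi (D : Set ℂ) : FreeAlgebra ℂ Bool →ₐ[ℂ] C(D, ℂ) :=
  FreeAlgebra.lift ℂ (fun b : Bool =>
    if b then Polynomial.toContinuousMapOnAlgHom D Polynomial.X
    else star (Polynomial.toContinuousMapOnAlgHom D Polynomial.X))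

lemma Phi_apply (D : Set ℂ) (P : FreeAlgebra ℂ Bool) (z : ℂ) (hz : z ∈ D) :
    (Phi D P) ⟨z, hz⟩
      = (FreeAlgebra.lift ℂ fun b : Bool => if b then z else (starRingEnd ℂ) z) P := by
  have : (ContinuousMap.evalAlgHom ℂ ℂ (⟨z, hz⟩ : D)).comp (Phi D)
      = FreeAlgebra.lift ℂ (fun b : Bool => if b then z else (starRingEnd ℂ) z) := by
    apply FreeAlgebra.hom_ext
    funext b
    cases b <;>
      simp only [Function.comp_apply, AlgHom.coe_comp, ContinuousMap.evalAlgHom_apply, Phi,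
        FreeAlgebra.lift_ι_apply, if_true, Bool.false_eq_true, if_false,
        ContinuousMap.star_apply, Polynomial.toContinuousMapOnAlgHom_apply,
        Polynomial.toContinuousMapOn_apply, Polynomial.toContinuousMap_apply, Polynomial.eval_X,
        starRingEnd_apply]
  exact DFunLike.congr_fun this P

lemma mem_range_of_mem_starClosure (D : Set ℂ) (g : C(D, ℂ))
    (hg : g ∈ (polynomialFunctions D).starClosure) : ∃ P, Phi D P = g := by
  rw [polynomialFunctions.starClosure_eq_adjoin_X, ← StarSubalgebra.mem_toSubalgebra,
    StarAlgebra.adjoin_toSubalgebra] at hg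
  have hle : Algebra.adjoin ℂ
      ({(Polynomial.toContinuousMapOnAlgHom D) Polynomial.X} ∪
        star {(Polynomial.toContinuousMapOnAlgHom D) Polynomial.X}) ≤ (Phi D).range := by
    apply Algebra.adjoin_le
    rw [Set.star_singleton]
    rintro f (rfl | rfl)
    · exact ⟨FreeAlgebra.ι ℂ true, by simp [Phi, FreeAlgebra.lift_ι_apply]⟩
    · exact ⟨FreeAlgebra.ι ℂ false, by simp [Phi, FreeAlgebra.lift_ι_apply]⟩
  exact hle hg

/-- if `K` and the `Kₖ` are nonempty compact subsets of `ℂ` and the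
sup-norms over `Kₖ` of every *-polynomial `P(λ, λ̄)` (an element of the free algebra on
two generators, evaluated at `λ` and `conj λ`) converge to the sup-norm over `K`, then
`sup_{λ ∈ Kₖ} dist(λ, K) → 0`. -/
theorem stmt_17 (K : Set ℂ) (Kk : ℕ → Set ℂ)
    (hK : IsCompact K) (hKne : K.Nonempty)
    (hKk : ∀ k, IsCompact (Kk k)) (hKkne : ∀ k, (Kk k).Nonempty)
    (h : ∀ P : FreeAlgebra ℂ Bool,
      Tendsto
        (fun k => sSup ((fun z : ℂ =>
          ‖FreeAlgebra.lift ℂ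
            (fun b : Bool => if b then z else (starRingEnd ℂ) z) P‖) '' Kk k))
        atTop
        (𝓝 (sSup ((fun z : ℂ =>
          ‖FreeAlgebra.lift ℂ
            (fun b : Bool => if b then z else (starRingEnd ℂ) z) P‖) '' K)))) :
    Tendsto (fun k => sSup ((fun z : ℂ => Metric.infDist z K) '' Kk k)) atTop (𝓝 0) := by
  classical
  set ev : FreeAlgebra ℂ Bool → ℂ → ℝ := fun P z =>
    ‖(FreeAlgebra.lift ℂ fun b : Bool => if b then z else (starRingEnd ℂ) z) P‖
    with hev
  have h' : ∀ P, Tendsto (fun k => sSup (ev P '' Kk k)) atTop (𝓝 (sSup (ev P '' K))) := h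
  have hcont : ∀ P, Continuous (ev P) := fun P => continuous_norm.comp (evP_cont P)
  have hbdd : ∀ (P) (s : Set ℂ), IsCompact s → BddAbove (ev P '' s) :=
    fun P s hs => (hs.image (hcont P)).bddAbove
  -- the uniform bound
  set P0 := FreeAlgebra.ι ℂ true with hP0
  have hevP0 : ∀ z : ℂ, ev P0 z = ‖z‖ := by
    intro z; simp [hev, hP0, FreeAlgebra.lift_ι_apply]
  set M := sSup (ev P0 '' K) with hM
  set D := Metric.closedBall (0 : ℂ) (M + 1) with hD
  have hKD : K ⊆ D := by
    intro z hz
    have h1 : ev P0 z ≤ M := le_csSup (hbdd P0 K hK) ⟨z, hz, rfl⟩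
    rw [hevP0 z] at h1
    simp only [hD, Metric.mem_closedBall, Complex.dist_eq, sub_zero]
    calc ‖z‖ ≤ M := h1
      _ ≤ M + 1 := by linarith
  have hsub : ∀ᶠ k in atTop, Kk k ⊆ D := by
    filter_upwards [(h' P0).eventually_lt_const (lt_add_one M)] with k hk z hz
    have h1 : ev P0 z ≤ sSup (ev P0 '' Kk k) := le_csSup (hbdd P0 _ (hKk k)) ⟨z, hz, rfl⟩
    rw [hevP0 z] at h1
    simp only [hD, Metric.mem_closedBall, Complex.dist_eq, sub_zero]
    exact h1.trans hk.le
  haveI : CompactSpace D := isCompact_iff_compactSpace.mp (isCompact_closedBall 0 (M + 1))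
  rw [tendsto_order]
  constructor
  · -- lower bound: the sup is nonnegative
    intro b hb
    filter_upwards with k
    obtain ⟨z, hz⟩ := hKkne k
    have h1 : Metric.infDist z K ≤ sSup ((fun z : ℂ => Metric.infDist z K) '' Kk k) :=
      le_csSup ((hKk k).image (continuous_infDist_pt K)).bddAbove ⟨z, hz, rfl⟩
    have h2 : (0 : ℝ) ≤ Metric.infDist z K := Metric.infDist_nonneg
    linarith
  · -- upper bound
    intro ε hε
    -- the cutoff function
    set f : C(D, ℂ) :=
      ⟨fun w => ((min 1 (Metric.infDist (w : ℂ) K / ε) : ℝ) : ℂ),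
        Complex.continuous_ofReal.comp
          ((continuous_const.min ((continuous_infDist_pt K).div_const ε)).comp
            continuous_subtype_val)⟩ with hf
    have hfmem : f ∈ closure ((polynomialFunctions D).starClosure : Set C(D, ℂ)) := by
      have h1 : f ∈ (polynomialFunctions D).starClosure.topologicalClosure := by
        rw [polynomialFunctions.starClosure_topologicalClosure]; trivial
      rwa [← SetLike.mem_coe, StarSubalgebra.topologicalClosure_coe] at h1
    obtain ⟨g, hg_mem, hg_dist⟩ := Metric.mem_closure_iff.mp hfmem (1 / 4) (by norm_num)
    obtain ⟨P, hP⟩ := mem_range_of_mem_starClosure D g hg_mem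
    -- the key identification
    have hevP : ∀ (z : ℂ) (hz : z ∈ D), ev P z = ‖g ⟨z, hz⟩‖ := by
      intro z hz
      show ‖
        (FreeAlgebra.lift ℂ fun b : Bool => if b then z else (starRingEnd ℂ) z) P‖ = _
      rw [← Phi_apply D P z hz, hP]
    -- nonnegativity of the cutoff value
    have hmin_nonneg : ∀ z : ℂ, 0 ≤ min 1 (Metric.infDist z K / ε) :=
      fun z => le_min zero_le_one (div_nonneg Metric.infDist_nonneg hε.le)
    -- sup over K is small
    have hKsmall : sSup (ev P '' K) ≤ 1 / 4 := by
      apply csSup_le (hKne.image _)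
      rintro _ ⟨z, hz, rfl⟩
      have hzD : z ∈ D := hKD hz
      have hfz : f ⟨z, hzD⟩ = 0 := by
        simp [hf, Metric.infDist_zero_of_mem hz]
      have : ev P z = dist (f ⟨z, hzD⟩) (g ⟨z, hzD⟩) := by
        rw [hevP z hzD, hfz, dist_comm, dist_zero_right]
      rw [this]
      exact (ContinuousMap.dist_apply_le_dist _).trans hg_dist.le
    have hsmall : ∀ᶠ k in atTop, sSup (ev P '' Kk k) < 1 / 2 :=
      (h' P).eventually_lt_const (lt_of_le_of_lt hKsmall (by norm_num))
    filter_upwards [hsub, hsmall] with k hkD hksmall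
    have hfin : sSup ((fun z : ℂ => Metric.infDist z K) '' Kk k) ≤ 3 / 4 * ε := by
      apply csSup_le ((hKkne k).image _)
      rintro _ ⟨z, hz, rfl⟩
      have hzD : z ∈ D := hkD hz
      have h1 : ev P z < 1 / 2 :=
        lt_of_le_of_lt (le_csSup (hbdd P _ (hKk k)) ⟨z, hz, rfl⟩) hksmall
      have h2 : ‖f ⟨z, hzD⟩‖ ≤ dist (f ⟨z, hzD⟩) (g ⟨z, hzD⟩)
          + ‖g ⟨z, hzD⟩‖ := by
        calc ‖f ⟨z, hzD⟩‖ = dist (f ⟨z, hzD⟩) 0 := by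
              rw [dist_zero_right]
          _ ≤ dist (f ⟨z, hzD⟩) (g ⟨z, hzD⟩) + dist (g ⟨z, hzD⟩) 0 := dist_triangle _ _ _
          _ = dist (f ⟨z, hzD⟩) (g ⟨z, hzD⟩) + ‖g ⟨z, hzD⟩‖ := by
              rw [dist_zero_right]
      have h3 : ‖f ⟨z, hzD⟩‖ = min 1 (Metric.infDist z K / ε) := by
        simp only [hf, ContinuousMap.coe_mk, Complex.norm_real, Real.norm_eq_abs]
        exact abs_of_nonneg (hmin_nonneg z)
      have h4 : dist (f ⟨z, hzD⟩) (g ⟨z, hzD⟩) < 1 / 4 :=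
        lt_of_le_of_lt (ContinuousMap.dist_apply_le_dist _) hg_dist
      have h5 : min 1 (Metric.infDist z K / ε) < 3 / 4 := by
        rw [← h3]
        calc ‖f ⟨z, hzD⟩‖ ≤ _ + _ := h2
          _ < 1 / 4 + 1 / 2 := by
              apply add_lt_add h4
              rw [← hevP z hzD]; exact h1
          _ = 3 / 4 := by norm_num
      have h6 : Metric.infDist z K / ε < 3 / 4 := by
        rcases le_or_gt (Metric.infDist z K / ε) 1 with hc | hc
        · rwa [min_eq_right hc] at h5
        · exfalso; rw [min_eq_left hc.le] at h5; norm_num at h5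
      have := (div_lt_iff₀ hε).mp h6
      linarith
    calc sSup ((fun z : ℂ => Metric.infDist z K) '' Kk k) ≤ 3 / 4 * ε := hfin
      _ < ε := by linarith
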